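/- Let K: \mathbb{R}^2 \to \mathbb{C} satisfy |K(y)| \le A\, t\delta (1+t\delta|y_1|)^{-3} \min\{1, |t y_1 + y_2|^{-3}\} for all y in the quadrant Q = \{y: y_1 \ge 0, y_2 \le 0\}, where 0 < t \le 1 and 0 < \delta < 1/2. Then for every locally integrable g and every x, \int_{Q} |K(y) g(x-y)|\, dy \le C A\, \mathfrak{m}_t g(x), where \mathfrak{m}_t is the maximal function over all rectangles containing x whose longest side is in the direction (1,t) or (1,-t), and C is independent of t and \delta. -/

import Mathlib

open MeasureTheory
open scoped ENNReal

/-- A rectangle centered at `c` whose longest side (half-length `a ≥ b`) points in the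
direction `(1, ε t)`. -/
def dirRect (t : ℝ) (c : ℝ × ℝ) (a b ε : ℝ) : Set (ℝ × ℝ) :=
  {y | |y.1 - c.1 + ε * t * (y.2 - c.2)| ≤ a ∧ |ε * t * (y.1 - c.1) - (y.2 - c.2)| ≤ b}

/-- The maximal function `𝔪_t`: supremum of averages of `|g|` over all rectangles
containing `x` whose longest side points in the direction `(1, t)` or `(1, -t)`. -/
noncomputable def dirMax (t : ℝ) (g : ℝ × ℝ → ℂ) (x : ℝ × ℝ) : ℝ≥0∞ :=
  ⨆ (c : ℝ × ℝ) (a : ℝ) (b : ℝ) (ε : ℝ)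
    (_ : 0 < b ∧ b ≤ a ∧ (ε = 1 ∨ ε = -1) ∧ x ∈ dirRect t c a b ε),
    (volume (dirRect t c a b ε))⁻¹ * ∫⁻ y in dirRect t c a b ε, (‖g y‖₊ : ℝ≥0∞)

lemma measurableSet_dirRect (t : ℝ) (c : ℝ × ℝ) (a b ε : ℝ) :
    MeasurableSet (dirRect t c a b ε) := by
  have h1 : Measurable fun y : ℝ × ℝ => |y.1 - c.1 + ε * t * (y.2 - c.2)| :=
    ((measurable_fst.sub_const c.1).add ((measurable_snd.sub_const c.2).const_mul (ε*t))).abs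
  have h2 : Measurable fun y : ℝ × ℝ => |ε * t * (y.1 - c.1) - (y.2 - c.2)| :=
    (((measurable_fst.sub_const c.1).const_mul (ε*t)).sub (measurable_snd.sub_const c.2)).abs
  exact (measurableSet_le h1 measurable_const).inter (measurableSet_le h2 measurable_const)

lemma vol_dirRect {t : ℝ} (ht : 0 < t) (c : ℝ × ℝ) {a b ε : ℝ} (ha : 0 ≤ a) (hb : 0 ≤ b)
    (hε : ε = 1 ∨ ε = -1) :
    volume (dirRect t c a b ε)
      = ENNReal.ofReal ((1 + t^2)⁻¹ * ((2*a) * (2*b))) := by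
  set f : (ℝ × ℝ) →ₗ[ℝ] (ℝ × ℝ) :=
    Matrix.toLin (Module.Basis.finTwoProd ℝ) (Module.Basis.finTwoProd ℝ) !![1, ε*t; ε*t, -1] with hf
  have hε2 : ε * ε = 1 := by rcases hε with h | h <;> rw [h] <;> ring
  have hdet : LinearMap.det f = -(1 + t^2) := by
    rw [hf, LinearMap.det_toLin, Matrix.det_fin_two_of]
    nlinarith [hε2]
  have hdet0 : LinearMap.det f ≠ 0 := by rw [hdet]; nlinarith
  have hset : dirRect t c a b ε
      = (fun y => y - c) ⁻¹' (f ⁻¹' (Set.Icc (-a) a ×ˢ Set.Icc (-b) b)) := by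
    ext y
    simp only [dirRect, Set.mem_setOf_eq, Set.mem_preimage, hf,
      Matrix.toLin_finTwoProd_apply, Set.mem_prod, Set.mem_Icc, Prod.fst_sub, Prod.snd_sub,
      ← abs_le]
    constructor
    · rintro ⟨h1, h2⟩
      constructor
      · calc |1 * (y.1 - c.1) + ε * t * (y.2 - c.2)| = |y.1 - c.1 + ε * t * (y.2 - c.2)| := by
              ring_nf
        _ ≤ a := h1
      · calc |ε * t * (y.1 - c.1) + -1 * (y.2 - c.2)| = |ε * t * (y.1 - c.1) - (y.2 - c.2)| := by
              ring_nf
        _ ≤ b := h2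
    · rintro ⟨h1, h2⟩
      constructor
      · calc |y.1 - c.1 + ε * t * (y.2 - c.2)| = |1 * (y.1 - c.1) + ε * t * (y.2 - c.2)| := by
              ring_nf
        _ ≤ a := h1
      · calc |ε * t * (y.1 - c.1) - (y.2 - c.2)| = |ε * t * (y.1 - c.1) + -1 * (y.2 - c.2)| := by
              ring_nf
        _ ≤ b := h2
  have hmeas : MeasurableSet (f ⁻¹' (Set.Icc (-a) a ×ˢ Set.Icc (-b) b)) := by
    exact (measurableSet_Icc.prod measurableSet_Icc).preimage
      f.continuous_of_finiteDimensional.measurable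
  rw [hset, (measurePreserving_sub_right volume c).measure_preimage hmeas.nullMeasurableSet,
    MeasureTheory.Measure.addHaar_preimage_linearMap volume hdet0, hdet,
    Measure.volume_eq_prod, Measure.prod_prod, Real.volume_Icc, Real.volume_Icc]
  have h1 : |(-(1 + t^2))⁻¹| = (1 + t^2)⁻¹ := by
    rw [abs_inv, abs_neg, abs_of_pos (by nlinarith)]
  rw [h1, ← ENNReal.ofReal_mul (by linarith), ← ENNReal.ofReal_mul (by positivity)]
  congr 1
  ring

lemma lint_sub (g : ℝ × ℝ → ℂ) (x : ℝ × ℝ) (t : ℝ) (c : ℝ × ℝ) (a b ε : ℝ) :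
    ∫⁻ y in dirRect t c a b ε, (‖g (x - y)‖₊ : ℝ≥0∞)
      = ∫⁻ z in dirRect t (x - c) a b ε, (‖g z‖₊ : ℝ≥0∞) := by
  have hset : ∀ y : ℝ × ℝ, (x - y ∈ dirRect t (x - c) a b ε) ↔ y ∈ dirRect t c a b ε := by
    intro y
    simp only [dirRect, Set.mem_setOf_eq, Prod.fst_sub, Prod.snd_sub]
    have e1 : x.1 - y.1 - (x.1 - c.1) + ε * t * (x.2 - y.2 - (x.2 - c.2))
        = -(y.1 - c.1 + ε * t * (y.2 - c.2)) := by ring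
    have e2 : ε * t * (x.1 - y.1 - (x.1 - c.1)) - (x.2 - y.2 - (x.2 - c.2))
        = -(ε * t * (y.1 - c.1) - (y.2 - c.2)) := by ring
    rw [e1, e2, abs_neg, abs_neg]
  rw [← lintegral_indicator (measurableSet_dirRect t c a b ε),
      ← lintegral_indicator (measurableSet_dirRect t (x - c) a b ε)]
  set F : ℝ × ℝ → ℝ≥0∞ := (dirRect t (x - c) a b ε).indicator fun z => (‖g z‖₊ : ℝ≥0∞) with hF
  have hFG : (dirRect t c a b ε).indicator (fun y => (‖g (x - y)‖₊ : ℝ≥0∞))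
      = fun y => F (x - y) := by
    funext y
    by_cases hy : y ∈ dirRect t c a b ε
    · rw [Set.indicator_of_mem hy, hF, Set.indicator_of_mem ((hset y).mpr hy)]
    · rw [Set.indicator_of_notMem hy, hF, Set.indicator_of_notMem (fun h => hy ((hset y).mp h))]
  rw [hFG]
  exact ((MeasureTheory.Measure.measurePreserving_sub_left volume x).lintegral_map_equiv F
    (MeasurableEquiv.subLeft x)).symm

lemma lint_rect_le (t : ℝ) (ht : 0 < t) (g : ℝ × ℝ → ℂ) (x : ℝ × ℝ) (c : ℝ × ℝ) (a b ε : ℝ)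
    (h : 0 < b ∧ b ≤ a ∧ (ε = 1 ∨ ε = -1) ∧ x ∈ dirRect t c a b ε) :
    ∫⁻ z in dirRect t c a b ε, (‖g z‖₊ : ℝ≥0∞)
      ≤ ENNReal.ofReal (4 * a * b) * dirMax t g x := by
  obtain ⟨hb, hab, hε, hx⟩ := h
  have ha : (0:ℝ) < a := lt_of_lt_of_le hb hab
  have hvol := vol_dirRect ht c ha.le hb.le hε
  have hpos : (0:ℝ) < (1 + t^2)⁻¹ * ((2*a) * (2*b)) := by positivity
  have hv0 : volume (dirRect t c a b ε) ≠ 0 := by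
    rw [hvol]; simp [ENNReal.ofReal_eq_zero, not_le, hpos]
  have hvfin : volume (dirRect t c a b ε) ≠ ⊤ := by rw [hvol]; exact ENNReal.ofReal_ne_top
  have havg : (volume (dirRect t c a b ε))⁻¹ * ∫⁻ z in dirRect t c a b ε, (‖g z‖₊ : ℝ≥0∞)
      ≤ dirMax t g x := by
    unfold dirMax
    refine le_iSup_of_le c (le_iSup_of_le a (le_iSup_of_le b (le_iSup_of_le ε ?_)))
    exact le_iSup (fun _ : (0 < b ∧ b ≤ a ∧ (ε = 1 ∨ ε = -1) ∧ x ∈ dirRect t c a b ε) =>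
      (volume (dirRect t c a b ε))⁻¹ * ∫⁻ z in dirRect t c a b ε, (‖g z‖₊ : ℝ≥0∞))
      ⟨hb, hab, hε, hx⟩
  calc ∫⁻ z in dirRect t c a b ε, (‖g z‖₊ : ℝ≥0∞)
      = volume (dirRect t c a b ε) *
        ((volume (dirRect t c a b ε))⁻¹ * ∫⁻ z in dirRect t c a b ε, (‖g z‖₊ : ℝ≥0∞)) := by
        rw [← mul_assoc, ENNReal.mul_inv_cancel hv0 hvfin, one_mul]
    _ ≤ volume (dirRect t c a b ε) * dirMax t g x := mul_le_mul_right havg _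
    _ ≤ ENNReal.ofReal (4 * a * b) * dirMax t g x := by
        refine mul_le_mul_left ?_ _
        rw [hvol]
        refine ENNReal.ofReal_le_ofReal ?_
        have h1 : (1 + t^2)⁻¹ ≤ 1 := by
          rw [inv_le_one_iff₀]; right; nlinarith
        nlinarith [h1, mul_pos (mul_pos (by linarith : (0:ℝ) < 2*a) (by linarith : (0:ℝ) < 2*b)) hpos]

lemma rpow_neg3_le {c x : ℝ} (hc : 0 < c) (hcx : c ≤ x) : x ^ (-(3:ℝ)) ≤ (c^3)⁻¹ := by
  have hx : 0 < x := lt_of_lt_of_le hc hcx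
  have h1 : x ^ (-(3:ℝ)) = (x^3)⁻¹ := by
    rw [Real.rpow_neg hx.le, show (3:ℝ) = ((3:ℕ):ℝ) by norm_num, Real.rpow_natCast]
  rw [h1]
  exact inv_anti₀ (by positivity) (pow_le_pow_left₀ hc.le hcx 3)

lemma doubling {i : ℕ} (hi : i ≠ 0) : (2:ℝ)^i = 2 * 2^(i-1) := by
  conv_lhs => rw [← Nat.succ_pred_eq_of_pos (Nat.pos_of_ne_zero hi)]
  rw [pow_succ, Nat.pred_eq_sub_one]
  ring

lemma doubling_le (i : ℕ) : (2:ℝ)^i ≤ 2 * 2^(i-1) := by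
  rcases Nat.eq_zero_or_pos i with h | h
  · subst h; norm_num
  · rw [doubling h.ne']

lemma cube_inv_le {P : ℝ} (i : ℕ) (hP : P = (2:ℝ)^i) :
    (((2:ℝ)^(i-1))^3)⁻¹ ≤ 8 * (P^3)⁻¹ := by
  have hz : (0:ℝ) < (2:ℝ)^(i-1) := by positivity
  have hP0 : (0:ℝ) < P := by rw [hP]; positivity
  have h5 : P^3 ≤ 8 * ((2:ℝ)^(i-1))^3 := by
    calc P^3 ≤ (2 * (2:ℝ)^(i-1))^3 := by
          apply pow_le_pow_left₀ hP0.le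
          rw [hP]; exact doubling_le i
      _ = 8 * ((2:ℝ)^(i-1))^3 := by ring
  rw [show (8:ℝ) * (P^3)⁻¹ = (P^3/8)⁻¹ by field_simp]
  apply inv_anti₀ (by positivity)
  linarith

lemma key_ineq {A td P Q : ℝ} (hA : 0 ≤ A) (htd : 0 < td) (htd1 : td ≤ 1)
    (hP : 1 ≤ P) (hQ : 1 ≤ Q) :
    (A*td*64*(P^3)⁻¹*(Q^3)⁻¹) * (4*(td⁻¹*P + Q)*Q) ≤ 512*A*P⁻¹*Q⁻¹ := by
  have hP0 : (0:ℝ) < P := by linarith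
  have hQ0 : (0:ℝ) < Q := by linarith
  have e1 : (A*td*64*(P^3)⁻¹*(Q^3)⁻¹) * (4*(td⁻¹*P + Q)*Q)
      = 256*A*(P+td*Q)*(P^3)⁻¹*(Q^2)⁻¹ := by
    field_simp
    ring
  rw [e1]
  have h1 : P + td*Q ≤ 2*P*Q := by nlinarith
  have h2 : 256*A*(P+td*Q)*(P^3)⁻¹*(Q^2)⁻¹ ≤ 256*A*(2*P*Q)*(P^3)⁻¹*(Q^2)⁻¹ := by gcongr
  refine le_trans h2 ?_
  have e2 : 256*A*(2*P*Q)*(P^3)⁻¹*(Q^2)⁻¹ = 512*A*(P^2)⁻¹*Q⁻¹ := by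
    field_simp
    ring
  rw [e2]
  gcongr 512*A*?_*Q⁻¹
  apply inv_anti₀ hP0
  nlinarith

set_option maxHeartbeats 2000000 in
/-- kernels with the decay
`|K(y)| ≤ A tδ (1+tδ|y₁|)^{-3} min{1, |ty₁+y₂|^{-3}}` on the quadrant
`Q = {y₁ ≥ 0, y₂ ≤ 0}` are dominated, upon integration against `g(x-·)`, by the
directional maximal function `𝔪_t g(x)`, uniformly in `t` and `δ`. -/
theorem kernel_dominated_by_dirMax :
    ∃ C > (0:ℝ), ∀ (t δ A : ℝ) (K g : ℝ × ℝ → ℂ) (x : ℝ × ℝ),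
      0 < t → t ≤ 1 → 0 < δ → δ < 1/2 → 0 ≤ A →
      (∀ y : ℝ × ℝ, 0 ≤ y.1 → y.2 ≤ 0 →
        (‖K y‖ ≤ A * t * δ * (1 + t * δ * |y.1|) ^ (-(3:ℝ))) ∧
        (1 ≤ |t * y.1 + y.2| →
          ‖K y‖ ≤ A * t * δ * (1 + t * δ * |y.1|) ^ (-(3:ℝ)) * |t * y.1 + y.2| ^ (-(3:ℝ)))) →
      ∫⁻ y in {y : ℝ × ℝ | 0 ≤ y.1 ∧ y.2 ≤ 0},
          (‖K y‖₊ : ℝ≥0∞) * (‖g (x - y)‖₊ : ℝ≥0∞)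
        ≤ ENNReal.ofReal (C * A) * dirMax t g x := by
  classical
  refine ⟨2048, by norm_num, ?_⟩
  intro t δ A K g x ht ht1 hδ hδ2 hA hK
  set r : ℝ := (t*δ)⁻¹ with hr
  have htδ : 0 < t*δ := mul_pos ht hδ
  have htδ1 : t*δ ≤ 1 := by nlinarith
  have hr0 : 0 < r := inv_pos.mpr htδ
  set S : ℕ → ℕ → Set (ℝ × ℝ) := fun i k =>
    {y | (0 ≤ y.1 ∧ y.2 ≤ 0) ∧ y.1 ≤ r*2^i ∧ |t*y.1+y.2| ≤ 2^k ∧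
      (i = 0 ∨ r*2^(i-1) ≤ y.1) ∧ (k = 0 ∨ (2:ℝ)^(k-1) ≤ |t*y.1+y.2|)} with hSdef
  have hSm : ∀ i k, MeasurableSet (S i k) := by
    intro i k
    have m1 : Measurable fun y : ℝ × ℝ => y.1 := measurable_fst
    have m2 : Measurable fun y : ℝ × ℝ => y.2 := measurable_snd
    have m3 : Measurable fun y : ℝ × ℝ => |t*y.1 + y.2| := ((m1.const_mul t).add m2).abs
    exact ((measurableSet_le measurable_const m1).inter
        (measurableSet_le m2 measurable_const)).inter
      ((measurableSet_le m1 measurable_const).inter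
        ((measurableSet_le m3 measurable_const).inter
          (((MeasurableSet.const _).union (measurableSet_le measurable_const m1)).inter
            ((MeasurableSet.const _).union (measurableSet_le measurable_const m3)))))
  have hcover : {y : ℝ × ℝ | 0 ≤ y.1 ∧ y.2 ≤ 0} ⊆ ⋃ p : ℕ × ℕ, S p.1 p.2 := by
    rintro y ⟨hy1, hy2⟩
    have hex1 : ∃ i : ℕ, y.1 ≤ r * 2^i := by
      obtain ⟨n, hn⟩ := exists_nat_gt (y.1 / r)
      refine ⟨n, ?_⟩
      rw [div_lt_iff₀ hr0] at hn
      have h2 : (n:ℝ) ≤ 2^n := by exact_mod_cast (Nat.lt_two_pow_self (n := n)).le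
      nlinarith
    have hex2 : ∃ k : ℕ, |t*y.1+y.2| ≤ 2^k := by
      obtain ⟨n, hn⟩ := exists_nat_gt |t*y.1+y.2|
      have h2 : (n:ℝ) ≤ 2^n := by exact_mod_cast (Nat.lt_two_pow_self (n := n)).le
      exact ⟨n, by linarith⟩
    refine Set.mem_iUnion.mpr ⟨(Nat.find hex1, Nat.find hex2),
      ⟨⟨hy1, hy2⟩, Nat.find_spec hex1, Nat.find_spec hex2, ?_, ?_⟩⟩
    · by_cases hi : Nat.find hex1 = 0
      · exact Or.inl hi
      · right
        have hm := Nat.find_min hex1 (m := Nat.find hex1 - 1) (by omega)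
        push_neg at hm
        exact hm.le
    · by_cases hk : Nat.find hex2 = 0
      · exact Or.inl hk
      · right
        have hm := Nat.find_min hex2 (m := Nat.find hex2 - 1) (by omega)
        push_neg at hm
        exact hm.le
  have hpiece : ∀ i k : ℕ, (∫⁻ y in S i k, (‖K y‖₊ : ℝ≥0∞) * (‖g (x - y)‖₊ : ℝ≥0∞))
      ≤ ENNReal.ofReal (512*A*((2:ℝ)⁻¹)^i*((2:ℝ)⁻¹)^k) * dirMax t g x := by
    intro i k
    set P : ℝ := (2:ℝ)^i with hP
    set Qk : ℝ := (2:ℝ)^k with hQk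
    have hP1 : (1:ℝ) ≤ P := one_le_pow₀ (by norm_num)
    have hQ1 : (1:ℝ) ≤ Qk := one_le_pow₀ (by norm_num)
    have hP0 : (0:ℝ) < P := by linarith
    have hQ0 : (0:ℝ) < Qk := by linarith
    set M : ℝ := A*(t*δ)*64*(P^3)⁻¹*(Qk^3)⁻¹ with hM
    have hM0 : (0:ℝ) ≤ M := by
      rw [hM]; positivity
    -- kernel bound on S i k
    have hKb : ∀ y ∈ S i k, ‖K y‖ ≤ M := by
      rintro y ⟨⟨hy1, hy2⟩, hle1, hle2, hlow1, hlow2⟩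
      obtain ⟨b1, b2⟩ := hK y hy1 hy2
      have habs : |y.1| = y.1 := abs_of_nonneg hy1
      have hbase0 : (0:ℝ) ≤ (1 + t*δ*|y.1|) ^ (-(3:ℝ)) :=
        Real.rpow_nonneg (by rw [habs]; nlinarith) _
      have h8i : (1 + t*δ*|y.1|) ^ (-(3:ℝ)) ≤ 8 * (P^3)⁻¹ := by
        have hbase1 : (1:ℝ) ≤ 1 + t*δ*|y.1| := by rw [habs]; nlinarith
        rcases hlow1 with hi0 | hil
        · have h1 := rpow_neg3_le one_pos hbase1
          have : P = 1 := by rw [hP, hi0]; norm_num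
          rw [this]
          norm_num at h1 ⊢
          linarith
        · have h2 : (2:ℝ)^(i-1) ≤ 1 + t*δ*|y.1| := by
            have e : t*δ*(r*2^(i-1)) = 2^(i-1) := by
              rw [hr]; field_simp
            have := mul_le_mul_of_nonneg_left hil htδ.le
            rw [e] at this
            rw [habs]
            nlinarith
          calc (1 + t*δ*|y.1|) ^ (-(3:ℝ)) ≤ (((2:ℝ)^(i-1))^3)⁻¹ :=
                rpow_neg3_le (by positivity) h2
            _ ≤ 8 * (P^3)⁻¹ := cube_inv_le i hP
      have key : ‖K y‖ ≤ A*t*δ * ((1 + t*δ*|y.1|) ^ (-(3:ℝ))) * (8*(Qk^3)⁻¹) := by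
        have hAtδ : (0:ℝ) ≤ A*t*δ := by positivity
        rcases hlow2 with hk0 | hkl
        · have hq : Qk = 1 := by rw [hQk, hk0]; norm_num
          rw [hq, show ((8:ℝ)*((1:ℝ)^3)⁻¹) = 8 by norm_num]
          nlinarith [b1, mul_nonneg hAtδ hbase0]
        · have h1v : (1:ℝ) ≤ |t*y.1+y.2| :=
            le_trans (one_le_pow₀ (by norm_num)) hkl
          have b2' := b2 h1v
          have h3 : |t*y.1+y.2| ^ (-(3:ℝ)) ≤ 8 * (Qk^3)⁻¹ :=
            le_trans (rpow_neg3_le (by positivity) hkl) (cube_inv_le k hQk)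
          calc ‖K y‖ ≤ A*t*δ * ((1 + t*δ*|y.1|) ^ (-(3:ℝ))) * (|t*y.1+y.2| ^ (-(3:ℝ))) := by
                exact b2'
            _ ≤ A*t*δ * ((1 + t*δ*|y.1|) ^ (-(3:ℝ))) * (8*(Qk^3)⁻¹) := by
                apply mul_le_mul_of_nonneg_left h3
                exact mul_nonneg hAtδ hbase0
      calc ‖K y‖ ≤ A*t*δ * ((1 + t*δ*|y.1|) ^ (-(3:ℝ))) * (8*(Qk^3)⁻¹) := key
        _ ≤ A*t*δ * (8*(P^3)⁻¹) * (8*(Qk^3)⁻¹) := by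
            apply mul_le_mul_of_nonneg_right _ (by positivity)
            apply mul_le_mul_of_nonneg_left h8i (by positivity)
        _ = M := by rw [hM]; ring
    -- constant out of the integral
    have hC : (∫⁻ y in S i k, (‖K y‖₊ : ℝ≥0∞) * (‖g (x - y)‖₊ : ℝ≥0∞))
        ≤ ENNReal.ofReal M * ∫⁻ y in S i k, (‖g (x - y)‖₊ : ℝ≥0∞) := by
      rw [← lintegral_const_mul' (ENNReal.ofReal M) _ ENNReal.ofReal_ne_top,
        ← lintegral_indicator (hSm i k), ← lintegral_indicator (hSm i k)]
      apply lintegral_mono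
      intro y
      by_cases hy : y ∈ S i k
      · rw [Set.indicator_of_mem hy, Set.indicator_of_mem hy]
        apply mul_le_mul_left
        rw [← enorm_eq_nnnorm, ← ofReal_norm]
        exact ENNReal.ofReal_le_ofReal (hKb y hy)
      · rw [Set.indicator_of_notMem hy, Set.indicator_of_notMem hy]
    -- the covering rectangle
    set L : ℝ := r * 2^i with hL
    have hL0 : (0:ℝ) < L := by rw [hL]; positivity
    set cc : ℝ × ℝ := (L/2, -(t*L/2)) with hcc
    set aa : ℝ := L + Qk with haa
    have ht2 : t^2 ≤ 1 := by nlinarith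
    have hsub : S i k ⊆ dirRect t cc aa Qk (-1) := by
      rintro y ⟨⟨hy1, hy2⟩, hle1, hle2, -, -⟩
      constructor
      · show |y.1 - cc.1 + (-1)*t*(y.2 - cc.2)| ≤ aa
        have e : y.1 - cc.1 + (-1)*t*(y.2 - cc.2)
            = (1+t^2)*(y.1 - L/2) - t*(t*y.1+y.2) := by
          rw [hcc]; ring
        rw [e]
        have h1 : |y.1 - L/2| ≤ L/2 := abs_le.mpr ⟨by linarith, by linarith⟩
        calc |(1+t^2)*(y.1 - L/2) - t*(t*y.1+y.2)|
            ≤ |(1+t^2)*(y.1 - L/2)| + |t*(t*y.1+y.2)| := abs_sub _ _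
          _ = (1+t^2)*|y.1 - L/2| + t*|t*y.1+y.2| := by
              rw [abs_mul, abs_mul, abs_of_pos (by nlinarith : (0:ℝ) < 1+t^2),
                abs_of_pos ht]
          _ ≤ (1+t^2)*(L/2) + 1*Qk := by
              refine add_le_add (mul_le_mul_of_nonneg_left h1 (by nlinarith)) ?_
              exact mul_le_mul ht1 hle2 (abs_nonneg _) (by norm_num)
          _ ≤ aa := by rw [haa]; nlinarith
      · show |(-1)*t*(y.1 - cc.1) - (y.2 - cc.2)| ≤ Qk
        have e : (-1)*t*(y.1 - cc.1) - (y.2 - cc.2) = -(t*y.1+y.2) := by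
          rw [hcc]; ring
        rw [e, abs_neg]
        exact hle2
    have hxmem : x ∈ dirRect t (x - cc) aa Qk (-1) := by
      constructor
      · show |x.1 - (x - cc).1 + (-1)*t*(x.2 - (x - cc).2)| ≤ aa
        have e : x.1 - (x - cc).1 + (-1)*t*(x.2 - (x - cc).2) = (1+t^2)*(L/2) := by
          simp only [Prod.fst_sub, Prod.snd_sub, hcc]
          ring
        rw [e, abs_of_nonneg (by nlinarith)]
        rw [haa]
        nlinarith
      · show |(-1)*t*(x.1 - (x - cc).1) - (x.2 - (x - cc).2)| ≤ Qk
        have e : (-1)*t*(x.1 - (x - cc).1) - (x.2 - (x - cc).2) = 0 := by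
          simp only [Prod.fst_sub, Prod.snd_sub, hcc]
          ring
        rw [e, abs_zero]
        linarith
    have hD := lint_rect_le t ht g x (x - cc) aa Qk (-1)
      ⟨hQ0, by rw [haa]; linarith, Or.inr rfl, hxmem⟩
    have hfinal : M * (4*aa*Qk) ≤ 512*A*((2:ℝ)⁻¹)^i*((2:ℝ)⁻¹)^k := by
      have e : M * (4*aa*Qk)
          = (A*(t*δ)*64*(P^3)⁻¹*(Qk^3)⁻¹) * (4*((t*δ)⁻¹*P + Qk)*Qk) := by
        rw [hM, haa, hL, hr, hP]
      rw [e, show ((2:ℝ)⁻¹)^i = P⁻¹ by rw [hP, inv_pow],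
        show ((2:ℝ)⁻¹)^k = Qk⁻¹ by rw [hQk, inv_pow]]
      exact key_ineq hA htδ htδ1 hP1 hQ1
    calc (∫⁻ y in S i k, (‖K y‖₊ : ℝ≥0∞) * (‖g (x - y)‖₊ : ℝ≥0∞))
        ≤ ENNReal.ofReal M * ∫⁻ y in S i k, (‖g (x - y)‖₊ : ℝ≥0∞) := hC
      _ ≤ ENNReal.ofReal M * ∫⁻ y in dirRect t cc aa Qk (-1), (‖g (x - y)‖₊ : ℝ≥0∞) :=
          mul_le_mul_right (lintegral_mono_set hsub) _
      _ = ENNReal.ofReal M * ∫⁻ z in dirRect t (x - cc) aa Qk (-1), (‖g z‖₊ : ℝ≥0∞) := by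
          rw [lint_sub]
      _ ≤ ENNReal.ofReal M * (ENNReal.ofReal (4*aa*Qk) * dirMax t g x) :=
          mul_le_mul_right hD _
      _ = ENNReal.ofReal (M * (4*aa*Qk)) * dirMax t g x := by
          rw [← mul_assoc, ← ENNReal.ofReal_mul hM0]
      _ ≤ ENNReal.ofReal (512*A*((2:ℝ)⁻¹)^i*((2:ℝ)⁻¹)^k) * dirMax t g x :=
          mul_le_mul_left (ENNReal.ofReal_le_ofReal hfinal) _
  -- sum the pieces
  have hg2 : ∑' n : ℕ, ((2:ℝ≥0∞)⁻¹)^n = 2 := by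
    rw [ENNReal.tsum_geometric, ENNReal.one_sub_inv_two, inv_inv]
  have h1 : ∀ p : ℕ × ℕ, ENNReal.ofReal (512*A*((2:ℝ)⁻¹)^p.1*((2:ℝ)⁻¹)^p.2)
      = ENNReal.ofReal (512*A) * ((2:ℝ≥0∞)⁻¹)^p.1 * ((2:ℝ≥0∞)⁻¹)^p.2 := by
    intro p
    have hnn1 : (0:ℝ) ≤ 512*A := by linarith
    have hnn2 : (0:ℝ) ≤ 512*A*((2:ℝ)⁻¹)^p.1 := by positivity
    rw [ENNReal.ofReal_mul hnn2, ENNReal.ofReal_mul hnn1]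
    have e : ∀ n : ℕ, ENNReal.ofReal (((2:ℝ)⁻¹)^n) = ((2:ℝ≥0∞)⁻¹)^n := by
      intro n
      rw [ENNReal.ofReal_pow (by norm_num)]
      congr 1
      rw [ENNReal.ofReal_inv_of_pos (by norm_num)]
      norm_num
    rw [e p.1, e p.2]
  have hsum : (∑' p : ℕ × ℕ, ENNReal.ofReal (512*A*((2:ℝ)⁻¹)^p.1*((2:ℝ)⁻¹)^p.2))
      ≤ ENNReal.ofReal (2048*A) := by
    calc (∑' p : ℕ × ℕ, ENNReal.ofReal (512*A*((2:ℝ)⁻¹)^p.1*((2:ℝ)⁻¹)^p.2))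
        = ∑' (i : ℕ) (k : ℕ),
            ENNReal.ofReal (512*A) * ((2:ℝ≥0∞)⁻¹)^i * ((2:ℝ≥0∞)⁻¹)^k := by
          simp_rw [h1]
          exact ENNReal.tsum_prod
            (f := fun i k => ENNReal.ofReal (512*A) * ((2:ℝ≥0∞)⁻¹)^i * ((2:ℝ≥0∞)⁻¹)^k)
      _ = ∑' (i : ℕ), ENNReal.ofReal (512*A) * ((2:ℝ≥0∞)⁻¹)^i * 2 := by
          refine tsum_congr fun i => ?_
          rw [ENNReal.tsum_mul_left, hg2]
      _ = (∑' (i : ℕ), ENNReal.ofReal (512*A) * ((2:ℝ≥0∞)⁻¹)^i) * 2 :=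
          ENNReal.tsum_mul_right
      _ = ENNReal.ofReal (512*A) * 2 * 2 := by
          rw [ENNReal.tsum_mul_left, hg2]
      _ ≤ ENNReal.ofReal (2048*A) := by
          rw [mul_assoc, show ((2:ℝ≥0∞) * 2) = ENNReal.ofReal 4 by norm_num,
            ← ENNReal.ofReal_mul (by linarith)]
          apply ENNReal.ofReal_le_ofReal
          nlinarith
  calc ∫⁻ y in {y : ℝ × ℝ | 0 ≤ y.1 ∧ y.2 ≤ 0},
        (‖K y‖₊ : ℝ≥0∞) * (‖g (x - y)‖₊ : ℝ≥0∞)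
      ≤ ∫⁻ y in ⋃ p : ℕ × ℕ, S p.1 p.2,
        (‖K y‖₊ : ℝ≥0∞) * (‖g (x - y)‖₊ : ℝ≥0∞) := lintegral_mono_set hcover
    _ ≤ ∑' p : ℕ × ℕ, ∫⁻ y in S p.1 p.2,
        (‖K y‖₊ : ℝ≥0∞) * (‖g (x - y)‖₊ : ℝ≥0∞) := lintegral_iUnion_le _ _
    _ ≤ ∑' p : ℕ × ℕ, ENNReal.ofReal (512*A*((2:ℝ)⁻¹)^p.1*((2:ℝ)⁻¹)^p.2) * dirMax t g x :=
        ENNReal.tsum_le_tsum fun p => hpiece p.1 p.2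
    _ = (∑' p : ℕ × ℕ, ENNReal.ofReal (512*A*((2:ℝ)⁻¹)^p.1*((2:ℝ)⁻¹)^p.2)) * dirMax t g x :=
        ENNReal.tsum_mul_right
    _ ≤ ENNReal.ofReal (2048*A) * dirMax t g x := mul_le_mul_left hsum _
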